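/- arXiv:2008.04655 — 6 statements merged into one kernel-verified Lean document; each statement's English description precedes it below -/
import Mathlib

section
/- For n ≥ 3, if A is an n×n×n line-stochastic tensor with all entries in {0,1}, then (1/n)·A is not an extreme point of the polytope of n×n×n plane-stochastic tensors. -/
/-- An `n × n × n` tensor is line-stochastic: nonnegative and all line sums equal 1. -/
def IsLineStochastic (n : ℕ) (A : Fin n → Fin n → Fin n → ℝ) : Prop :=
  (∀ i j k, 0 ≤ A i j k) ∧
  (∀ j k, ∑ i, A i j k = 1) ∧
  (∀ i k, ∑ j, A i j k = 1) ∧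
  (∀ i j, ∑ k, A i j k = 1)

/-- An `n × n × n` tensor is plane-stochastic: nonnegative and all plane sums equal 1. -/
def IsPlaneStochastic (n : ℕ) (A : Fin n → Fin n → Fin n → ℝ) : Prop :=
  (∀ i j k, 0 ≤ A i j k) ∧
  (∀ k, ∑ i, ∑ j, A i j k = 1) ∧
  (∀ i, ∑ j, ∑ k, A i j k = 1) ∧
  (∀ j, ∑ i, ∑ k, A i j k = 1)

/-- `x` is an extreme point of the convex set `K`. -/
def IsExtremePt {E : Type*} [AddCommGroup E] [Module ℝ E] (K : Set E) (x : E) : Prop :=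
  x ∈ K ∧ ∀ e ∈ K, ∀ f ∈ K, ∀ r : ℝ, 0 < r → r < 1 →
    x = r • e + (1 - r) • f → e = f

theorem stmt_5 (n : ℕ) (hn : 3 ≤ n) (A : Fin n → Fin n → Fin n → ℝ)
    (hA : IsLineStochastic n A) (h01 : ∀ i j k, A i j k = 0 ∨ A i j k = 1) :
    ¬ IsExtremePt {B : Fin n → Fin n → Fin n → ℝ | IsPlaneStochastic n B}
        (fun i j k => (1 / (n : ℝ)) * A i j k) := by
  obtain ⟨hpos, hI, hJ, hK⟩ := hA
  have hnpos : 0 < n := by omega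
  haveI : NeZero n := ⟨by omega⟩
  haveI : Nonempty (Fin n) := ⟨⟨0, hnpos⟩⟩
  have hnR : (0 : ℝ) < n := by exact_mod_cast hnpos
  -- The constraint linear map
  let T : ((Fin n × Fin n) → ℝ) →ₗ[ℝ]
      ((Fin n ⊕ ({j : Fin n // j ≠ 0} ⊕ {k : Fin n // k ≠ 0})) → ℝ) :=
    { toFun := fun d s => Sum.rec (fun i => ∑ j, d (i, j))
        (Sum.rec (fun j => ∑ i, d (i, j.1)) (fun k => ∑ i, ∑ j, d (i, j) * A i j k.1)) s
      map_add' := by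
        intro a b; funext s
        rcases s with i | j | k <;>
          simp [Finset.sum_add_distrib, add_mul]
      map_smul' := by
        intro r a; funext s
        rcases s with i | j | k <;>
          simp [Finset.mul_sum, mul_assoc] }
  have hninj : ¬ Function.Injective T := by
    intro h
    have hle := LinearMap.finrank_le_finrank_of_injective h
    rw [Module.finrank_fintype_fun_eq_card, Module.finrank_fintype_fun_eq_card] at hle
    have hc1 : Fintype.card (Fin n × Fin n) = n * n := by simp
    have hc2 : Fintype.card {j : Fin n // j ≠ 0} = n - 1 := by simp
    rw [hc1] at hle
    rw [Fintype.card_sum, Fintype.card_sum, hc2, Fintype.card_fin] at hle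
    have h3 : 3 * n ≤ n * n := Nat.mul_le_mul_right n hn
    omega
  obtain ⟨a, b, hab, hne⟩ := Function.not_injective_iff.mp hninj
  set d : Fin n × Fin n → ℝ := a - b with hd
  have hd0 : d ≠ 0 := sub_ne_zero.mpr hne
  have hTd : T d = 0 := by rw [map_sub, hab, sub_self]
  have hrow : ∀ i, ∑ j, d (i, j) = 0 := fun i => congrFun hTd (Sum.inl i)
  have hcol' : ∀ j : Fin n, j ≠ 0 → ∑ i, d (i, j) = 0 :=
    fun j hj => congrFun hTd (Sum.inr (Sum.inl ⟨j, hj⟩))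
  have hsym' : ∀ k : Fin n, k ≠ 0 → ∑ i, ∑ j, d (i, j) * A i j k = 0 :=
    fun k hk => congrFun hTd (Sum.inr (Sum.inr ⟨k, hk⟩))
  have htot : ∑ i, ∑ j, d (i, j) = 0 := by simp [hrow]
  have hcol : ∀ j, ∑ i, d (i, j) = 0 := by
    intro j
    by_cases hj : j = 0
    · subst hj
      have h1 : ∑ j : Fin n, ∑ i, d (i, j) = 0 := by rw [Finset.sum_comm]; exact htot
      rw [Finset.sum_eq_single (0 : Fin n) (fun j _ hj => hcol' j hj) (by simp)] at h1
      exact h1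
    · exact hcol' j hj
  have hsym : ∀ k, ∑ i, ∑ j, d (i, j) * A i j k = 0 := by
    intro k
    by_cases hk : k = 0
    · subst hk
      have h1 : ∑ k : Fin n, ∑ i, ∑ j, d (i, j) * A i j k = 0 := by
        rw [Finset.sum_comm]
        have : ∀ i, ∑ k : Fin n, ∑ j, d (i, j) * A i j k = ∑ j, d (i, j) := by
          intro i
          rw [Finset.sum_comm]
          refine Finset.sum_congr rfl fun j _ => ?_
          rw [← Finset.mul_sum, hK i j, mul_one]
        simp only [this]
        exact htot
      rw [Finset.sum_eq_single (0 : Fin n) (fun k _ hk => hsym' k hk) (by simp)] at h1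
      exact h1
    · exact hsym' k hk
  -- extract a nonzero entry and bound
  have hdp : ∃ p, d p ≠ 0 := by
    by_contra h; push_neg at h; exact hd0 (funext fun p => h p)
  obtain ⟨p0, hp0⟩ := hdp
  set M : ℝ := Finset.univ.sup' Finset.univ_nonempty (fun p : Fin n × Fin n => |d p|) with hM
  have hMle : ∀ p, |d p| ≤ M := fun p =>
    Finset.le_sup' (fun p : Fin n × Fin n => |d p|) (Finset.mem_univ p)
  have hM0 : 0 < M := lt_of_lt_of_le (abs_pos.mpr hp0) (hMle p0)
  set c : ℝ := 1 / (n * M) with hc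
  have hc0 : 0 < c := by positivity
  have hbound : ∀ t : ℝ, |t| ≤ c → ∀ p, |t * d p| ≤ 1 / n := by
    intro t ht p
    rw [abs_mul]
    calc |t| * |d p| ≤ c * M := by
          apply mul_le_mul ht (hMle p) (abs_nonneg _) (le_of_lt hc0)
      _ = 1 / n := by rw [hc]; field_simp
  have hplaneK : ∀ k, ∑ i, ∑ j, A i j k = n := by
    intro k; rw [Finset.sum_comm]; simp [hI]
  -- membership of perturbed tensors
  have hmem : ∀ t : ℝ, |t| ≤ c →
      (fun i j k => ((1 / (n : ℝ)) + t * d (i, j)) * A i j k) ∈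
        {B : Fin n → Fin n → Fin n → ℝ | IsPlaneStochastic n B} := by
    intro t ht
    refine ⟨?_, ?_, ?_, ?_⟩
    · intro i j k
      show (0:ℝ) ≤ ((1 / (n : ℝ)) + t * d (i, j)) * A i j k
      rcases h01 i j k with h | h
      · simp [h]
      · rw [h, mul_one]
        have h1 := abs_le.mp (hbound t ht (i, j))
        linarith [h1.1]
    · intro k
      calc ∑ i, ∑ j, ((1 / (n : ℝ)) + t * d (i, j)) * A i j k
          = (1 / (n : ℝ)) * (∑ i, ∑ j, A i j k) + t * ∑ i, ∑ j, d (i, j) * A i j k := by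
            rw [Finset.mul_sum, Finset.mul_sum, ← Finset.sum_add_distrib]
            refine Finset.sum_congr rfl fun i _ => ?_
            rw [Finset.mul_sum, Finset.mul_sum, ← Finset.sum_add_distrib]
            refine Finset.sum_congr rfl fun j _ => ?_
            ring
        _ = 1 := by rw [hplaneK, hsym k, mul_zero, add_zero]; field_simp
    · intro i
      calc ∑ j, ∑ k, ((1 / (n : ℝ)) + t * d (i, j)) * A i j k
          = ∑ j, ((1 / (n : ℝ)) + t * d (i, j)) := by
            refine Finset.sum_congr rfl fun j _ => ?_
            rw [← Finset.mul_sum, hK i j, mul_one]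
        _ = n * (1 / (n : ℝ)) + t * ∑ j, d (i, j) := by
            rw [Finset.sum_add_distrib, Finset.sum_const, Finset.card_univ, Fintype.card_fin,
              nsmul_eq_mul, ← Finset.mul_sum]
        _ = 1 := by rw [hrow i, mul_zero, add_zero]; field_simp
    · intro j
      calc ∑ i, ∑ k, ((1 / (n : ℝ)) + t * d (i, j)) * A i j k
          = ∑ i, ((1 / (n : ℝ)) + t * d (i, j)) := by
            refine Finset.sum_congr rfl fun i _ => ?_
            rw [← Finset.mul_sum, hK i j, mul_one]
        _ = n * (1 / (n : ℝ)) + t * ∑ i, d (i, j) := by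
            rw [Finset.sum_add_distrib, Finset.sum_const, Finset.card_univ, Fintype.card_fin,
              nsmul_eq_mul, ← Finset.mul_sum]
        _ = 1 := by rw [hcol j, mul_zero, add_zero]; field_simp
  intro hext
  have hcabs : |c| ≤ c := le_of_eq (abs_of_pos hc0)
  have hcabs' : |(-c)| ≤ c := by rw [abs_neg]; exact hcabs
  have hB := hmem c hcabs
  have hC := hmem (-c) hcabs'
  have hxeq : (fun i j k => (1 / (n : ℝ)) * A i j k)
      = (1/2 : ℝ) • (fun i j k => ((1 / (n : ℝ)) + c * d (i, j)) * A i j k)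
        + (1 - 1/2 : ℝ) • (fun i j k => ((1 / (n : ℝ)) + (-c) * d (i, j)) * A i j k) := by
    funext i j k
    simp only [Pi.add_apply, Pi.smul_apply, smul_eq_mul]
    ring
  have heq := hext.2 _ hB _ hC (1/2) (by norm_num) (by norm_num) hxeq
  have hk0 : ∃ k, A p0.1 p0.2 k = 1 := by
    by_contra h
    push_neg at h
    have hz : ∀ k, A p0.1 p0.2 k = 0 := fun k => (h01 _ _ k).resolve_right (h k)
    have hs := hK p0.1 p0.2
    rw [Finset.sum_congr rfl (fun k _ => hz k)] at hs
    simp at hs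
  obtain ⟨k0, hk0⟩ := hk0
  have hev := congrFun (congrFun (congrFun heq p0.1) p0.2) k0
  rw [hk0, mul_one, mul_one] at hev
  have hdpe : d (p0.1, p0.2) ≠ 0 := by rw [Prod.mk.eta]; exact hp0
  have hcd : c * d (p0.1, p0.2) = 0 := by linarith
  rcases mul_eq_zero.mp hcd with h | h
  · exact absurd h (ne_of_gt hc0)
  · exact hdpe h
end

section
/- The polytope of n×n×n plane-stochastic tensors has at least (n!)² extreme points. -/
/-- Permutation tensor. -/
def permTensor {n : ℕ} (σ τ : Equiv.Perm (Fin n)) : Fin n → Fin n → Fin n → ℝ :=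
  fun i j k => if j = σ i ∧ k = τ i then 1 else 0

lemma permTensor_planeStochastic {n : ℕ} (σ τ : Equiv.Perm (Fin n)) :
    IsPlaneStochastic n (permTensor σ τ) := by
  refine ⟨fun i j k => by unfold permTensor; positivity, ?_, ?_, ?_⟩
  · intro k
    have : ∀ i : Fin n, (∑ j, permTensor σ τ i j k) = if k = τ i then 1 else 0 := by
      intro i
      simp [permTensor, Finset.sum_ite_eq', ite_and]
    simp only [this]
    have hfil : Finset.filter (fun x => k = τ x) Finset.univ = {τ.symm k} := by
      ext x; simp [eq_comm, Equiv.eq_symm_apply]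
    simp [hfil]
  · intro i
    have : ∀ j : Fin n, (∑ k, permTensor σ τ i j k) = if j = σ i then 1 else 0 := by
      intro j
      simp [permTensor, ite_and, Finset.sum_ite_eq']
    simp [this]
  · intro j
    have : ∀ i : Fin n, (∑ k, permTensor σ τ i j k) = if j = σ i then 1 else 0 := by
      intro i
      simp [permTensor, ite_and, Finset.sum_ite_eq']
    simp only [this]
    have hfil : Finset.filter (fun x => j = σ x) Finset.univ = {σ.symm j} := by
      ext x; simp [eq_comm, Equiv.eq_symm_apply]
    simp [hfil]

lemma entry_le_one {n : ℕ} {A : Fin n → Fin n → Fin n → ℝ} (h : IsPlaneStochastic n A)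
    (i j k : Fin n) : A i j k ≤ 1 := by
  obtain ⟨hnn, -, hrow, -⟩ := h
  calc A i j k ≤ ∑ k', A i j k' :=
        Finset.single_le_sum (fun k' _ => hnn i j k') (Finset.mem_univ k)
    _ ≤ ∑ j', ∑ k', A i j' k' :=
        Finset.single_le_sum (f := fun j' => ∑ k', A i j' k')
          (fun j' _ => Finset.sum_nonneg fun k' _ => hnn i j' k') (Finset.mem_univ j)
    _ = 1 := hrow i

lemma zeroOne_extreme {n : ℕ} {A : Fin n → Fin n → Fin n → ℝ} (hA : IsPlaneStochastic n A)
    (h01 : ∀ i j k, A i j k = 0 ∨ A i j k = 1) :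
    IsExtremePt {B : Fin n → Fin n → Fin n → ℝ | IsPlaneStochastic n B} A := by
  refine ⟨hA, ?_⟩
  intro e he f hf r hr hr1 heq
  funext i j k
  have hb0 : 0 ≤ e i j k := he.1 i j k
  have hc0 : 0 ≤ f i j k := hf.1 i j k
  have hb1 : e i j k ≤ 1 := entry_le_one he i j k
  have hc1 : f i j k ≤ 1 := entry_le_one hf i j k
  have hcoord : A i j k = r * e i j k + (1 - r) * f i j k := by
    have := congrFun (congrFun (congrFun heq i) j) k
    simpa using this
  rcases h01 i j k with h | h <;> rw [h] at hcoord <;> nlinarith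

theorem stmt_11 (n : ℕ) :
    ∃ S : Finset (Fin n → Fin n → Fin n → ℝ),
      (∀ A ∈ S, IsExtremePt {B : Fin n → Fin n → Fin n → ℝ | IsPlaneStochastic n B} A) ∧
      (Nat.factorial n) ^ 2 ≤ S.card := by
  refine ⟨Finset.univ.image (fun p : Equiv.Perm (Fin n) × Equiv.Perm (Fin n) =>
    permTensor p.1 p.2), ?_, ?_⟩
  · intro A hA
    simp only [Finset.mem_image] at hA
    obtain ⟨p, -, rfl⟩ := hA
    refine zeroOne_extreme (permTensor_planeStochastic p.1 p.2) ?_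
    intro i j k
    unfold permTensor
    split <;> simp
  · rw [Finset.card_image_of_injective _ ?_, Finset.card_univ]
    · simp [Fintype.card_prod, Fintype.card_perm, Fintype.card_fin, sq]
    · intro p q hpq
      have hpq' : permTensor p.1 p.2 = permTensor q.1 q.2 := hpq
      have h : ∀ i : Fin n, p.1 i = q.1 i ∧ p.2 i = q.2 i := by
        intro i
        have key : permTensor q.1 q.2 i (p.1 i) (p.2 i) = 1 := by
          rw [← hpq']; simp [permTensor]
        unfold permTensor at key
        by_contra hc
        rw [if_neg hc] at key
        norm_num at key
      exact Prod.ext (Equiv.ext fun i => (h i).1) (Equiv.ext fun i => (h i).2)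
end

section
/- The rank of the 3n²×n³ coefficient matrix L of the linear system defining n×n×n line-stochastic tensors equals 3n² − 3n + 1. -/
/-- The `3n² × n³` coefficient matrix of the line-sum constraints defining
`n × n × n` line-stochastic tensors.  Rows of type `0` encode `∑ᵢ a_{ijk} = 1` (pair `(j,k)`),
rows of type `1` encode `∑ⱼ a_{ijk} = 1` (pair `(i,k)`), and rows of type `2` encode
`∑ₖ a_{ijk} = 1` (pair `(i,j)`). -/
def lineCoeffMatrix (n : ℕ) :
    Matrix (Fin 3 × Fin n × Fin n) (Fin n × Fin n × Fin n) ℝ :=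
  fun r c =>
    if (r.1 = 0 ∧ c.2.1 = r.2.1 ∧ c.2.2 = r.2.2) ∨
       (r.1 = 1 ∧ c.1 = r.2.1 ∧ c.2.2 = r.2.2) ∨
       (r.1 = 2 ∧ c.1 = r.2.1 ∧ c.2.1 = r.2.2) then 1 else 0

lemma key (n : ℕ) (y : Fin 3 × Fin n × Fin n → ℝ) (c : Fin n × Fin n × Fin n) :
    (lineCoeffMatrix n).transpose.mulVec y c =
      y (0, c.2.1, c.2.2) + y (1, c.1, c.2.2) + y (2, c.1, c.2.1) := by
  obtain ⟨i, j, k⟩ := c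
  simp only [Matrix.mulVec, Matrix.transpose_apply, lineCoeffMatrix, dotProduct,
    Fintype.sum_prod_type, Fin.sum_univ_three]
  simp [ite_and, eq_comm, Finset.sum_ite_eq]

/-- parameter map whose range is the left kernel -/
noncomputable def phi (n : ℕ) :
    ((Fin n → ℝ) × (Fin n → ℝ) × (Fin n → ℝ)) →ₗ[ℝ] (Fin 3 × Fin n × Fin n → ℝ) where
  toFun p := fun r =>
    if r.1 = 0 then - p.1 r.2.2 - p.2.1 r.2.1
    else if r.1 = 1 then p.1 r.2.2 + p.2.2 r.2.1
    else p.2.1 r.2.2 - p.2.2 r.2.1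
  map_add' p q := by
    funext r; by_cases h0 : r.1 = 0 <;> by_cases h1 : r.1 = 1 <;>
      simp [h0, h1] <;> ring
  map_smul' c p := by
    funext r; by_cases h0 : r.1 = 0 <;> by_cases h1 : r.1 = 1 <;>
      simp [h0, h1] <;> ring

lemma range_phi (n : ℕ) (hn : 0 < n) :
    LinearMap.range (phi n) = LinearMap.ker ((lineCoeffMatrix n).transpose.mulVecLin) := by
  ext y
  constructor
  · rintro ⟨⟨g, h, t⟩, rfl⟩
    rw [LinearMap.mem_ker]
    funext c
    rw [Matrix.mulVecLin_apply, key]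
    simp [phi]
    ring
  · intro hy
    rw [LinearMap.mem_ker] at hy
    have E : ∀ i j k : Fin n, y (0, j, k) + y (1, i, k) + y (2, i, j) = 0 := by
      intro i j k
      have := congrFun hy (i, j, k)
      rw [Matrix.mulVecLin_apply, key] at this
      simpa using this
    set z : Fin n := ⟨0, hn⟩
    refine ⟨⟨fun k => y (1, z, k), fun j => y (2, z, j), fun i => y (1, i, z) - y (1, z, z)⟩, ?_⟩
    funext r
    obtain ⟨a, p, q⟩ := r
    fin_cases a
    · simp only [show (⟨0, by omega⟩ : Fin 3) = (0 : Fin 3) from rfl]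
      have := E z p q
      simp [phi]
      linarith
    · simp only [show (⟨1, by omega⟩ : Fin 3) = (1 : Fin 3) from rfl]
      have e1 := E p z q
      have e2 := E z z q
      have e3 := E p z z
      have e4 := E z z z
      simp [phi]
      linarith
    · simp only [show (⟨2, by omega⟩ : Fin 3) = (2 : Fin 3) from rfl]
      have e1 := E p q z
      have e2 := E z q z
      simp [phi]
      linarith

lemma ker_phi (n : ℕ) (hn : 0 < n) :
    LinearMap.ker (phi n) =
      Submodule.span ℝ {((fun _ => 1, fun _ => -1, fun _ => -1) :
        (Fin n → ℝ) × (Fin n → ℝ) × (Fin n → ℝ))} := by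
  set z : Fin n := ⟨0, hn⟩
  ext ⟨g, h, t⟩
  simp only [LinearMap.mem_ker, Submodule.mem_span_singleton]
  constructor
  · intro hp
    have hv : ∀ r : Fin 3 × Fin n × Fin n, phi n (g, h, t) r = 0 := fun r => congrFun hp r
    have h0 : ∀ j k : Fin n, - g k - h j = 0 := by
      intro j k; have := hv (0, j, k); simpa [phi] using this
    have h1 : ∀ i k : Fin n, g k + t i = 0 := by
      intro i k; have := hv (1, i, k); simpa [phi] using this
    have h2 : ∀ i j : Fin n, h j - t i = 0 := by
      intro i j; have := hv (2, i, j); simpa [phi] using this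
    refine ⟨- t z, ?_⟩
    refine Prod.ext ?_ (Prod.ext ?_ ?_)
    · funext k; have := h1 z k; simp; linarith
    · funext j; have := h2 z j; simp; linarith
    · funext i; have a := h1 i z; have b := h1 z z; simp; linarith
  · rintro ⟨c, hc⟩
    rw [← hc]
    rw [map_smul]
    have : phi n ((fun _ => 1, fun _ => -1, fun _ => -1) :
        (Fin n → ℝ) × (Fin n → ℝ) × (Fin n → ℝ)) = 0 := by
      funext r
      by_cases h0 : r.1 = 0 <;> by_cases h1 : r.1 = 1 <;> simp [phi, h0, h1]
    rw [this, smul_zero]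

theorem stmt_12 (n : ℕ) (hn : 0 < n) :
    (lineCoeffMatrix n).rank = 3 * n ^ 2 + 1 - 3 * n := by
  have hT : (lineCoeffMatrix n).rank = (lineCoeffMatrix n).transpose.rank :=
    (Matrix.rank_transpose _).symm
  have hrn := LinearMap.finrank_range_add_finrank_ker ((lineCoeffMatrix n).transpose.mulVecLin)
  have hdom : Module.finrank ℝ (Fin 3 × Fin n × Fin n → ℝ) = 3 * n ^ 2 := by
    simp [Module.finrank_pi]
    ring
  have hker : Module.finrank ℝ (LinearMap.ker ((lineCoeffMatrix n).transpose.mulVecLin)) =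
      3 * n - 1 := by
    rw [← range_phi n hn]
    have hrn2 := LinearMap.finrank_range_add_finrank_ker (phi n)
    have hdom2 : Module.finrank ℝ ((Fin n → ℝ) × (Fin n → ℝ) × (Fin n → ℝ)) = 3 * n := by
      simp [Module.finrank_pi]
      ring
    have hk1 : Module.finrank ℝ (LinearMap.ker (phi n)) = 1 := by
      rw [ker_phi n hn]
      apply finrank_span_singleton
      intro hcontra
      have := congrFun (congrArg Prod.fst hcontra) ⟨0, hn⟩
      norm_num at this
    omega
  have hrank : (lineCoeffMatrix n).transpose.rank = 3 * n ^ 2 + 1 - 3 * n := by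
    rw [Matrix.rank]
    have h3 : 3 * n ≥ 1 := by omega
    have hsq : 3 * n ≤ 3 * n ^ 2 := by nlinarith
    omega
  rw [hT, hrank]
end

section
/- The affine span of the set of n×n×n line-stochastic tensors in ℝ^{n³} has dimension (n−1)³. -/
open Finset
set_option maxHeartbeats 1000000

section Ext
variable {m : ℕ} {α : Type*} [AddCommGroup α]

/-- Extend a vector of length `m` to length `m+1` so that the total sum is zero. -/
def extz (v : Fin m → α) : Fin (m+1) → α :=
  fun x => Fin.lastCases (-∑ i, v i) v x

@[simp] lemma extz_castSucc (v : Fin m → α) (a : Fin m) : extz v a.castSucc = v a := by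
  simp [extz]

@[simp] lemma extz_last (v : Fin m → α) : extz v (Fin.last m) = -∑ i, v i := by
  simp [extz]

lemma extz_sum (v : Fin m → α) : ∑ x, extz v x = 0 := by
  rw [Fin.sum_univ_castSucc]; simp

end Ext

section Phi
variable {m : ℕ}

/-- propagation: sum over last coordinate (depth 1 below ext) -/
lemma prop1 (v : Fin m → (Fin (m+1) → ℝ)) (h : ∀ a, ∑ k, v a k = 0) (x : Fin (m+1)) :
    ∑ k, extz v x k = 0 := by
  induction x using Fin.lastCases with
  | last => simp [Finset.sum_apply]; rw [Finset.sum_comm]; simp [h]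
  | cast a => simp [h]

lemma prop2 (v : Fin m → (Fin (m+1) → Fin (m+1) → ℝ)) (h : ∀ a j, ∑ k, v a j k = 0)
    (x j : Fin (m+1)) : ∑ k, extz v x j k = 0 := by
  induction x using Fin.lastCases with
  | last => simp [Finset.sum_apply]; rw [Finset.sum_comm]; simp [h]
  | cast a => simp [h]

/-- Extension of an m×m×m tensor to an (m+1)×(m+1)×(m+1) tensor with all line sums 0. -/
def Phi (B : Fin m → Fin m → Fin m → ℝ) : Fin (m+1) → Fin (m+1) → Fin (m+1) → ℝ :=
  extz (fun i' => extz (fun j' => extz (B i' j')))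

lemma Phi_castSucc (B : Fin m → Fin m → Fin m → ℝ) (i j k : Fin m) :
    Phi B i.castSucc j.castSucc k.castSucc = B i j k := by
  simp [Phi]

lemma Phi_sum_k (B : Fin m → Fin m → Fin m → ℝ) (i j : Fin (m+1)) :
    ∑ k, Phi B i j k = 0 := by
  exact prop2 _ (fun a j => prop1 _ (fun b => extz_sum _) j) i j

lemma Phi_sum_j (B : Fin m → Fin m → Fin m → ℝ) (i k : Fin (m+1)) :
    ∑ j, Phi B i j k = 0 := by
  unfold Phi
  induction i using Fin.lastCases with
  | last =>
      simp only [extz_last, Pi.neg_apply, Finset.sum_apply, Finset.sum_neg_distrib]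
      rw [Finset.sum_comm]
      have : ∀ a : Fin m, ∑ j, extz (fun j' => extz (B a j')) j k = 0 := by
        intro a
        have h := extz_sum (fun j' => extz (B a j'))
        have := congrFun h k
        simpa [Finset.sum_apply] using this
      simp [this]
  | cast a =>
      simp only [extz_castSucc]
      have h := extz_sum (fun j' => extz (B a j'))
      have := congrFun h k
      simpa [Finset.sum_apply] using this

lemma Phi_sum_i (B : Fin m → Fin m → Fin m → ℝ) (j k : Fin (m+1)) :
    ∑ i, Phi B i j k = 0 := by
  unfold Phi
  have h := extz_sum (fun i' => extz (fun j' => extz (B i' j')))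
  have := congrFun (congrFun h j) k
  simpa [Finset.sum_apply] using this

end Phi

section Vsub
variable (m : ℕ)

/-- The subspace of tensors with all line sums zero. -/
def Vsub : Submodule ℝ (Fin (m+1) → Fin (m+1) → Fin (m+1) → ℝ) where
  carrier := {A | (∀ j k, ∑ i, A i j k = 0) ∧ (∀ i k, ∑ j, A i j k = 0) ∧
      (∀ i j, ∑ k, A i j k = 0)}
  add_mem' := by
    rintro a b ⟨h1, h2, h3⟩ ⟨g1, g2, g3⟩
    refine ⟨?_, ?_, ?_⟩ <;> intro x y <;>
      simp [Finset.sum_add_distrib, h1, h2, h3, g1, g2, g3]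
  zero_mem' := by refine ⟨?_, ?_, ?_⟩ <;> intro x y <;> simp
  smul_mem' := by
    rintro c a ⟨h1, h2, h3⟩
    refine ⟨?_, ?_, ?_⟩ <;> intro x y <;>
      simp [← Finset.mul_sum, h1, h2, h3]

variable {m}

lemma Vsub_eq_zero {A : Fin (m+1) → Fin (m+1) → Fin (m+1) → ℝ} (hA : A ∈ Vsub m)
    (h0 : ∀ i j k : Fin m, A i.castSucc j.castSucc k.castSucc = 0) : A = 0 := by
  obtain ⟨h1, h2, h3⟩ := hA
  -- step 1: entries with first index arbitrary, last two interior
  have L0 : ∀ (i : Fin (m+1)) (j k : Fin m), A i j.castSucc k.castSucc = 0 := by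
    intro i j k
    induction i using Fin.lastCases with
    | last =>
        have := h1 j.castSucc k.castSucc
        rw [Fin.sum_univ_castSucc] at this
        simpa [h0] using this
    | cast a => exact h0 a j k
  have L1 : ∀ (i j : Fin (m+1)) (k : Fin m), A i j k.castSucc = 0 := by
    intro i j k
    induction j using Fin.lastCases with
    | last =>
        have := h2 i k.castSucc
        rw [Fin.sum_univ_castSucc] at this
        simpa [L0] using this
    | cast a => exact L0 i a k
  have L2 : ∀ (i j k : Fin (m+1)), A i j k = 0 := by
    intro i j k
    induction k using Fin.lastCases with
    | last =>
        have := h3 i j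
        rw [Fin.sum_univ_castSucc] at this
        simpa [L1] using this
    | cast a => exact L1 i j a
  funext i j k; exact L2 i j k

lemma Phi_mem_Vsub (B : Fin m → Fin m → Fin m → ℝ) : Phi B ∈ Vsub m :=
  ⟨fun j k => Phi_sum_i B j k, fun i k => Phi_sum_j B i k, fun i j => Phi_sum_k B i j⟩

/-- restriction linear map -/
def restr : (Fin (m+1) → Fin (m+1) → Fin (m+1) → ℝ) →ₗ[ℝ]
    (Fin m → Fin m → Fin m → ℝ) where
  toFun A := fun i j k => A i.castSucc j.castSucc k.castSucc
  map_add' := by intros; rfl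
  map_smul' := by intros; rfl

lemma finrank_Vsub (m : ℕ) : Module.finrank ℝ (Vsub m) = m ^ 3 := by
  have hbij : Function.Bijective ((restr (m := m)).comp (Vsub m).subtype) := by
    constructor
    · intro a b hab
      have h0 : ∀ i j k : Fin m,
          ((a : Fin (m+1) → Fin (m+1) → Fin (m+1) → ℝ) - b) i.castSucc j.castSucc k.castSucc = 0 := by
        intro i j k
        have := congrFun (congrFun (congrFun hab i) j) k
        simpa [restr, sub_eq_zero] using this
      have h := Vsub_eq_zero (sub_mem a.2 b.2) h0
      exact Subtype.ext (sub_eq_zero.mp h)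
    · intro B
      refine ⟨⟨Phi B, Phi_mem_Vsub B⟩, ?_⟩
      funext i j k
      exact Phi_castSucc B i j k
  have e := LinearEquiv.ofBijective _ hbij
  rw [e.finrank_eq]
  simp [Module.finrank_pi_fintype, Module.finrank_pi]; ring

end Vsub

section Span
variable {m : ℕ}

lemma uniform_mem : (fun _ _ _ => ((m:ℝ)+1)⁻¹) ∈
    {A : Fin (m+1) → Fin (m+1) → Fin (m+1) → ℝ | IsLineStochastic (m+1) A} := by
  have hne : ((m:ℝ)+1) ≠ 0 := by positivity
  have hsum : ∀ _x _y : Fin (m+1), (∑ _z : Fin (m+1), ((m:ℝ)+1)⁻¹) = 1 := by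
    intro _ _
    rw [Finset.sum_const, Finset.card_univ, Fintype.card_fin, nsmul_eq_mul]
    push_cast
    rw [mul_inv_cancel₀ hne]
  exact ⟨fun _ _ _ => by positivity, fun j k => hsum j k, fun i k => hsum i k,
    fun i j => hsum i j⟩

lemma vectorSpan_eq (m : ℕ) :
    vectorSpan ℝ {A : Fin (m+1) → Fin (m+1) → Fin (m+1) → ℝ | IsLineStochastic (m+1) A}
      = Vsub m := by
  apply le_antisymm
  · rw [vectorSpan_def]
    apply Submodule.span_le.mpr
    rintro x ⟨a, ha, b, hb, rfl⟩
    obtain ⟨_, a1, a2, a3⟩ := ha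
    obtain ⟨_, b1, b2, b3⟩ := hb
    refine ⟨?_, ?_, ?_⟩ <;> intro x y <;>
      simp [vsub_eq_sub, Finset.sum_sub_distrib, a1, a2, a3, b1, b2, b3]
  · intro A hA
    obtain ⟨h1, h2, h3⟩ := hA
    set U : Fin (m+1) → Fin (m+1) → Fin (m+1) → ℝ := fun _ _ _ => ((m:ℝ)+1)⁻¹ with hU
    set M := ∑ i, ∑ j, ∑ k, |A i j k| with hM
    have hM0 : 0 ≤ M :=
      Finset.sum_nonneg fun _ _ => Finset.sum_nonneg fun _ _ =>
        Finset.sum_nonneg fun _ _ => abs_nonneg _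
    have habs : ∀ i j k, |A i j k| ≤ M := by
      intro i j k
      calc |A i j k| ≤ ∑ k', |A i j k'| :=
            Finset.single_le_sum (f := fun k' => |A i j k'|)
              (fun _ _ => abs_nonneg _) (Finset.mem_univ k)
        _ ≤ ∑ j', ∑ k', |A i j' k'| :=
            Finset.single_le_sum (f := fun j' => ∑ k', |A i j' k'|)
              (fun _ _ => by positivity) (Finset.mem_univ j)
        _ ≤ M :=
            Finset.single_le_sum (f := fun i' => ∑ j', ∑ k', |A i' j' k'|)
              (fun _ _ => by positivity) (Finset.mem_univ i)
    set ε : ℝ := (((m:ℝ)+1) * (M+1))⁻¹ with hε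
    have hε0 : 0 < ε := by
      rw [hε]
      exact inv_pos.mpr (mul_pos (by positivity) (by linarith))
    have hkey : ε * (M+1) = ((m:ℝ)+1)⁻¹ := by
      rw [hε, mul_inv]
      field_simp
    have hUA : U + ε • A ∈
        {A : Fin (m+1) → Fin (m+1) → Fin (m+1) → ℝ | IsLineStochastic (m+1) A} := by
      have hsum : ∀ x y : Fin (m+1), (∑ _z : Fin (m+1), ((m:ℝ)+1)⁻¹) = 1 :=
        fun x y => (uniform_mem (m := m)).2.1 x y
      refine ⟨?_, ?_, ?_, ?_⟩
      · intro i j k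
        have hb := abs_le.mp (habs i j k)
        have hle : ε * (-M) ≤ ε * A i j k := by
          exact mul_le_mul_of_nonneg_left hb.1 hε0.le
        simp only [Pi.add_apply, Pi.smul_apply, smul_eq_mul, hU]
        nlinarith [hε0.le]
      · intro j k
        simp only [Pi.add_apply, Pi.smul_apply, smul_eq_mul]
        rw [Finset.sum_add_distrib, ← Finset.mul_sum, h1 j k, hU]
        simpa using hsum j k
      · intro i k
        simp only [Pi.add_apply, Pi.smul_apply, smul_eq_mul]
        rw [Finset.sum_add_distrib, ← Finset.mul_sum, h2 i k, hU]
        simpa using hsum i k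
      · intro i j
        simp only [Pi.add_apply, Pi.smul_apply, smul_eq_mul]
        rw [Finset.sum_add_distrib, ← Finset.mul_sum, h3 i j, hU]
        simpa using hsum i j
    have hmem := vsub_mem_vectorSpan ℝ hUA (uniform_mem (m := m))
    have hAeq : A = ε⁻¹ • ((U + ε • A) -ᵥ U) := by
      funext i j k
      simp only [vsub_eq_sub, Pi.smul_apply, Pi.sub_apply, Pi.add_apply, smul_eq_mul]
      field_simp
      ring
    rw [hAeq]
    exact Submodule.smul_mem _ _ hmem

end Span

theorem stmt_14 (n : ℕ) (hn : 0 < n) :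
    Module.finrank ℝ
      (affineSpan ℝ {A : Fin n → Fin n → Fin n → ℝ | IsLineStochastic n A}).direction
      = (n - 1) ^ 3 := by
  obtain ⟨m, rfl⟩ := Nat.exists_eq_succ_of_ne_zero hn.ne'
  rw [direction_affineSpan, vectorSpan_eq m, finrank_Vsub]
  simp
end

section
/- The affine span of the set of n×n×n plane-stochastic tensors in ℝ^{n³} has dimension n³ − 3n + 2. -/
open Finset

noncomputable def Lmap (n : ℕ) : (Fin n → Fin n → Fin n → ℝ) →ₗ[ℝ]
    (Fin n → ℝ) × (Fin n → ℝ) × (Fin n → ℝ) where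
  toFun A := (fun k => ∑ i, ∑ j, A i j k, fun i => ∑ j, ∑ k, A i j k,
    fun j => ∑ i, ∑ k, A i j k)
  map_add' A B := by
    refine Prod.ext ?_ (Prod.ext ?_ ?_) <;> funext x <;>
      simp [Finset.sum_add_distrib]
  map_smul' c A := by
    refine Prod.ext ?_ (Prod.ext ?_ ?_) <;> funext x <;>
      simp [Finset.mul_sum]

noncomputable def Mmap (n : ℕ) : ((Fin n → ℝ) × (Fin n → ℝ) × (Fin n → ℝ)) →ₗ[ℝ] ℝ × ℝ where
  toFun p := (∑ x, p.1 x - ∑ x, p.2.1 x, ∑ x, p.2.1 x - ∑ x, p.2.2 x)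
  map_add' p q := by
    simp [Finset.sum_add_distrib, Prod.ext_iff]; constructor <;> ring
  map_smul' c p := by
    simp [Prod.ext_iff]
    constructor <;> simp [mul_sub, Finset.mul_sum]

lemma stoch_L (n : ℕ) (A : Fin n → Fin n → Fin n → ℝ) (hA : IsPlaneStochastic n A) :
    Lmap n A = (fun _ => 1, fun _ => 1, fun _ => 1) := by
  obtain ⟨-, h1, h2, h3⟩ := hA
  refine Prod.ext ?_ (Prod.ext ?_ ?_) <;> funext x <;>
    simp [Lmap, h1, h2, h3]

lemma uniform_mem_s15 (n : ℕ) (hn : 0 < n) :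
    IsPlaneStochastic n (fun _ _ _ => ((n:ℝ)^2)⁻¹) := by
  have hn' : (0:ℝ) < n := by exact_mod_cast hn
  have h : (0:ℝ) ≤ ((n:ℝ)^2)⁻¹ := by positivity
  refine ⟨fun _ _ _ => h, ?_, ?_, ?_⟩ <;> intro _ <;>
    · simp [Finset.sum_const, card_univ]
      field_simp

lemma abs_le_triple_sum (n : ℕ) (B : Fin n → Fin n → Fin n → ℝ) (i j k : Fin n) :
    |B i j k| ≤ ∑ i', ∑ j', ∑ k', |B i' j' k'| := by
  calc |B i j k| ≤ ∑ k', |B i j k'| :=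
        Finset.single_le_sum (f := fun k' => |B i j k'|)
          (fun _ _ => abs_nonneg _) (mem_univ k)
    _ ≤ ∑ j', ∑ k', |B i j' k'| :=
        Finset.single_le_sum (f := fun j' => ∑ k', |B i j' k'|)
          (fun _ _ => Finset.sum_nonneg fun _ _ => abs_nonneg _) (mem_univ j)
    _ ≤ ∑ i', ∑ j', ∑ k', |B i' j' k'| :=
        Finset.single_le_sum (f := fun i' => ∑ j', ∑ k', |B i' j' k'|)
          (fun _ _ => Finset.sum_nonneg fun _ _ => Finset.sum_nonneg fun _ _ => abs_nonneg _)
          (mem_univ i)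

lemma perturb_mem (n : ℕ) (hn : 0 < n) (B : Fin n → Fin n → Fin n → ℝ)
    (hB : Lmap n B = 0) :
    IsPlaneStochastic n (fun i j k =>
      ((n:ℝ)^2)⁻¹ + (((n:ℝ)^2 * ((∑ i', ∑ j', ∑ k', |B i' j' k'|) + 1))⁻¹) * B i j k) := by
  have hn' : (0:ℝ) < n := by exact_mod_cast hn
  set C : ℝ := (∑ i', ∑ j', ∑ k', |B i' j' k'|) + 1 with hC
  have hC0 : 0 < C := by
    have : 0 ≤ ∑ i', ∑ j', ∑ k', |B i' j' k'| :=
      Finset.sum_nonneg fun _ _ => Finset.sum_nonneg fun _ _ =>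
        Finset.sum_nonneg fun _ _ => abs_nonneg _
    linarith
  set ε : ℝ := ((n:ℝ)^2 * C)⁻¹ with hε
  have hε0 : 0 < ε := by positivity
  have hB1 : ∀ k, ∑ i, ∑ j, B i j k = 0 := fun k => congrFun (congrArg Prod.fst hB) k
  have hB2 : ∀ i, ∑ j, ∑ k, B i j k = 0 := fun i =>
    congrFun (congrArg (fun p => p.2.1) hB) i
  have hB3 : ∀ j, ∑ i, ∑ k, B i j k = 0 := fun j =>
    congrFun (congrArg (fun p => p.2.2) hB) j
  refine ⟨?_, ?_, ?_, ?_⟩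
  · intro i j k
    have habs : |B i j k| ≤ C := by
      have := abs_le_triple_sum n B i j k
      linarith
    have h1 : ε * |B i j k| ≤ ε * C := by nlinarith
    have h2 : ε * C = ((n:ℝ)^2)⁻¹ * (C⁻¹ * C) := by
      rw [hε, mul_inv]; ring
    have h3 : ε * C = ((n:ℝ)^2)⁻¹ := by
      rw [h2, inv_mul_cancel₀ (ne_of_gt hC0), mul_one]
    have := neg_abs_le (B i j k)
    nlinarith [abs_nonneg (B i j k)]
  all_goals intro x
  · have := hB1 x
    simp [Finset.sum_add_distrib, Finset.mul_sum, card_univ, this, ← Finset.mul_sum]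
    field_simp
  · have := hB2 x
    simp [Finset.sum_add_distrib, Finset.mul_sum, card_univ, this, ← Finset.mul_sum]
    field_simp
  · have := hB3 x
    simp [Finset.sum_add_distrib, Finset.mul_sum, card_univ, this, ← Finset.mul_sum]
    field_simp

lemma direction_eq (n : ℕ) (hn : 0 < n) :
    (affineSpan ℝ {A : Fin n → Fin n → Fin n → ℝ | IsPlaneStochastic n A}).direction
      = LinearMap.ker (Lmap n) := by
  rw [direction_affineSpan]
  apply le_antisymm
  · rw [vectorSpan_def, Submodule.span_le]
    rintro x ⟨a, ha, b, hb, rfl⟩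
    simp only [SetLike.mem_coe, LinearMap.mem_ker, vsub_eq_sub, map_sub]
    rw [stoch_L n a ha, stoch_L n b hb, sub_self]
  · intro B hB
    have hB0 : Lmap n B = 0 := LinearMap.mem_ker.1 hB
    have hU := uniform_mem_s15 n hn
    have hA := perturb_mem n hn B hB0
    have hn' : (0:ℝ) < n := by exact_mod_cast hn
    have hC0 : (0:ℝ) < (∑ i', ∑ j', ∑ k', |B i' j' k'|) + 1 := by
      have : 0 ≤ ∑ i', ∑ j', ∑ k', |B i' j' k'| :=
        Finset.sum_nonneg fun _ _ => Finset.sum_nonneg fun _ _ =>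
          Finset.sum_nonneg fun _ _ => abs_nonneg _
      linarith
    set ε : ℝ := ((n:ℝ)^2 * ((∑ i', ∑ j', ∑ k', |B i' j' k'|) + 1))⁻¹ with hε
    have hε0 : 0 < ε := by positivity
    have hmem := vsub_mem_vectorSpan ℝ (Set.mem_setOf.2 hA) (Set.mem_setOf.2 hU)
    have hBeq : B = ε⁻¹ • ((fun i j k => ((n:ℝ)^2)⁻¹ + ε * B i j k) -ᵥ
        (fun _ _ _ => ((n:ℝ)^2)⁻¹ : Fin n → Fin n → Fin n → ℝ)) := by
      funext i j k
      have : ((fun i j k => ((n:ℝ)^2)⁻¹ + ε * B i j k) -ᵥ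
          (fun _ _ _ => ((n:ℝ)^2)⁻¹ : Fin n → Fin n → Fin n → ℝ)) i j k
          = ε * B i j k := by
        simp [vsub_eq_sub]
      show B i j k = (ε⁻¹ • ((fun i j k => ((n:ℝ)^2)⁻¹ + ε * B i j k) -ᵥ
          (fun _ _ _ => ((n:ℝ)^2)⁻¹ : Fin n → Fin n → Fin n → ℝ))) i j k
      simp only [Pi.smul_apply, this, smul_eq_mul]
      field_simp
    rw [hBeq]
    exact Submodule.smul_mem _ _ hmem

lemma finrank_tensor (n : ℕ) :
    Module.finrank ℝ (Fin n → Fin n → Fin n → ℝ) = n ^ 3 := by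
  simp [Module.finrank_pi_fintype, Module.finrank_fintype_fun_eq_card]
  ring

lemma finrank_triple (n : ℕ) :
    Module.finrank ℝ ((Fin n → ℝ) × (Fin n → ℝ) × (Fin n → ℝ)) = 3 * n := by
  simp [Module.finrank_prod, Module.finrank_fintype_fun_eq_card]
  ring

lemma M_surj (n : ℕ) (hn : 0 < n) : Function.Surjective (Mmap n) := by
  have hn' : ((n:ℝ)) ≠ 0 := by positivity
  rintro ⟨a, b⟩
  refine ⟨(fun _ => (a + b) / n, fun _ => b / n, fun _ => 0), ?_⟩
  simp [Mmap, Finset.sum_const, card_univ, Prod.ext_iff]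
  constructor <;> field_simp
  ring

lemma range_L (n : ℕ) (hn : 0 < n) :
    LinearMap.range (Lmap n) = LinearMap.ker (Mmap n) := by
  have hn' : ((n:ℝ)) ≠ 0 := by positivity
  apply le_antisymm
  · rintro p ⟨A, rfl⟩
    have h1 : ∑ k, ∑ i, ∑ j, A i j k = ∑ i, ∑ j, ∑ k, A i j k := by
      rw [Finset.sum_comm]
      exact Finset.sum_congr rfl fun i _ => Finset.sum_comm
    have h2 : ∑ j, ∑ i, ∑ k, A i j k = ∑ i, ∑ j, ∑ k, A i j k :=
      Finset.sum_comm
    simp only [LinearMap.mem_ker, Mmap, Lmap, LinearMap.coe_mk, AddHom.coe_mk, Prod.ext_iff,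
      Prod.fst_zero, Prod.snd_zero]
    constructor <;> rw [sub_eq_zero]
    · exact h1
    · exact h2.symm
  · rintro ⟨x, y, z⟩ hp
    simp only [LinearMap.mem_ker, Mmap, LinearMap.coe_mk, AddHom.coe_mk, Prod.ext_iff,
      Prod.fst_zero, Prod.snd_zero, sub_eq_zero] at hp
    obtain ⟨hxy, hyz⟩ := hp
    refine ⟨fun i j k => y i / (n:ℝ)^2 + z j / (n:ℝ)^2 + x k / (n:ℝ)^2
      - 2 * (∑ t, x t) / (n:ℝ)^3, ?_⟩
    have hy : ∑ t, y t = ∑ t, x t := hxy.symm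
    have hz : ∑ t, z t = ∑ t, x t := by rw [← hyz, hy]
    refine Prod.ext ?_ (Prod.ext ?_ ?_) <;> funext w <;>
      · simp only [Lmap, LinearMap.coe_mk, AddHom.coe_mk]
        simp only [Finset.sum_add_distrib, Finset.sum_sub_distrib, ← Finset.sum_div,
          Finset.sum_const, card_univ, Fintype.card_fin, nsmul_eq_mul, hy, hz]
        field_simp
        simp only [← Finset.mul_sum, hy, hz]
        ring

theorem stmt_15 (n : ℕ) (hn : 0 < n) :
    Module.finrank ℝ
      (affineSpan ℝ {A : Fin n → Fin n → Fin n → ℝ | IsPlaneStochastic n A}).direction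
      = n ^ 3 + 2 - 3 * n := by
  rw [direction_eq n hn]
  have hM : LinearMap.range (Mmap n) = ⊤ := LinearMap.range_eq_top.2 (M_surj n hn)
  have e1 := LinearMap.finrank_range_add_finrank_ker (Mmap n)
  rw [hM, finrank_top, finrank_triple] at e1
  have hRR : Module.finrank ℝ (ℝ × ℝ) = 2 := by
    simp [Module.finrank_prod]
  rw [hRR] at e1
  have e2 := LinearMap.finrank_range_add_finrank_ker (Lmap n)
  rw [range_L n hn, finrank_tensor] at e2
  generalize hm : n ^ 3 = m at e2 ⊢
  omega
end

section
/- The polytope of 2×2×2 line-stochastic tensors has exactly two extreme points, namely the two {0,1}-valued line-stochastic tensors: A with a₁₁₁ = a₂₂₁ = a₁₂₂ = a₂₁₂ = 1 and all other entries 0, and B with a₁₂₁ = a₂₁₁ = a₁₁₂ = a₂₂₂ = 1 and all other entries 0. -/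
/-- A `2 × 2 × 2` tensor is line-stochastic: nonnegative and all line sums equal 1. -/
def IsLineStochastic2 (A : Fin 2 → Fin 2 → Fin 2 → ℝ) : Prop :=
  (∀ i j k, 0 ≤ A i j k) ∧
  (∀ j k, ∑ i, A i j k = 1) ∧
  (∀ i k, ∑ j, A i j k = 1) ∧
  (∀ i j, ∑ k, A i j k = 1)

/-- The tensor with `a₁₁₁ = a₂₂₁ = a₁₂₂ = a₂₁₂ = 1` and all other entries `0`
(indices shifted to start at `0`). -/
noncomputable def tensorA : Fin 2 → Fin 2 → Fin 2 → ℝ :=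
  fun i j k =>
    if (i = 0 ∧ j = 0 ∧ k = 0) ∨ (i = 1 ∧ j = 1 ∧ k = 0) ∨
       (i = 0 ∧ j = 1 ∧ k = 1) ∨ (i = 1 ∧ j = 0 ∧ k = 1) then 1 else 0

/-- The tensor with `a₁₂₁ = a₂₁₁ = a₁₁₂ = a₂₂₂ = 1` and all other entries `0`
(indices shifted to start at `0`). -/
noncomputable def tensorB : Fin 2 → Fin 2 → Fin 2 → ℝ :=
  fun i j k =>
    if (i = 0 ∧ j = 1 ∧ k = 0) ∨ (i = 1 ∧ j = 0 ∧ k = 0) ∨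
       (i = 0 ∧ j = 0 ∧ k = 1) ∨ (i = 1 ∧ j = 1 ∧ k = 1) then 1 else 0

lemma memA : IsLineStochastic2 tensorA := by
  refine ⟨?_, ?_, ?_, ?_⟩
  · intro i j k; fin_cases i <;> fin_cases j <;> fin_cases k <;> norm_num [tensorA]
  · intro j k; fin_cases j <;> fin_cases k <;> norm_num [tensorA, Fin.sum_univ_two]
  · intro i k; fin_cases i <;> fin_cases k <;> norm_num [tensorA, Fin.sum_univ_two]
  · intro i j; fin_cases i <;> fin_cases j <;> norm_num [tensorA, Fin.sum_univ_two]

lemma memB : IsLineStochastic2 tensorB := by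
  refine ⟨?_, ?_, ?_, ?_⟩
  · intro i j k; fin_cases i <;> fin_cases j <;> fin_cases k <;> norm_num [tensorB]
  · intro j k; fin_cases j <;> fin_cases k <;> norm_num [tensorB, Fin.sum_univ_two]
  · intro i k; fin_cases i <;> fin_cases k <;> norm_num [tensorB, Fin.sum_univ_two]
  · intro i j; fin_cases i <;> fin_cases j <;> norm_num [tensorB, Fin.sum_univ_two]

lemma AneB : tensorA ≠ tensorB := by
  intro h
  have := congrFun (congrFun (congrFun h 0) 0) 0
  norm_num [tensorA, tensorB] at this

lemma repr_lemma (X : Fin 2 → Fin 2 → Fin 2 → ℝ) (hX : IsLineStochastic2 X) :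
    X = X 0 0 0 • tensorA + (1 - X 0 0 0) • tensorB := by
  obtain ⟨h0, h1, h2, h3⟩ := hX
  have A1 := h1 0 0; have A2 := h1 1 0; have A3 := h1 0 1; have A4 := h1 1 1
  have B1 := h2 0 0; have B2 := h2 1 0; have B3 := h2 0 1; have B4 := h2 1 1
  have C1 := h3 0 0; have C2 := h3 1 0; have C3 := h3 0 1; have C4 := h3 1 1
  simp only [Fin.sum_univ_two] at A1 A2 A3 A4 B1 B2 B3 B4 C1 C2 C3 C4
  funext i j k
  fin_cases i <;> fin_cases j <;> fin_cases k <;>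
    simp [tensorA, tensorB, Pi.add_apply, smul_eq_mul] <;> linarith

lemma entry_le_one_s19 (X : Fin 2 → Fin 2 → Fin 2 → ℝ) (hX : IsLineStochastic2 X)
    (i j k : Fin 2) : X i j k ≤ 1 := by
  obtain ⟨h0, h1, _, _⟩ := hX
  have := h1 j k
  rw [Fin.sum_univ_two] at this
  fin_cases i <;> simp only [Fin.zero_eta, Fin.mk_one]
  · have := h0 1 j k; linarith
  · have := h0 0 j k; linarith

theorem stmt_19 :
    {A : Fin 2 → Fin 2 → Fin 2 → ℝ |
        IsExtremePt {B : Fin 2 → Fin 2 → Fin 2 → ℝ | IsLineStochastic2 B} A}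
      = {tensorA, tensorB} := by
  ext X
  simp only [Set.mem_setOf_eq, Set.mem_insert_iff, Set.mem_singleton_iff]
  constructor
  · rintro ⟨hXK, hext⟩
    have ht0 : 0 ≤ X 0 0 0 := hXK.1 0 0 0
    have ht1 : X 0 0 0 ≤ 1 := entry_le_one_s19 X hXK 0 0 0
    rcases eq_or_lt_of_le ht0 with h0 | h0
    · right
      have := repr_lemma X hXK
      rw [← h0] at this
      simpa using this
    rcases eq_or_lt_of_le ht1 with h1 | h1
    · left
      have := repr_lemma X hXK
      rw [h1] at this
      simpa using this
    · exact absurd (hext tensorA memA tensorB memB (X 0 0 0) h0 h1 (repr_lemma X hXK)) AneB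
  · rintro (rfl | rfl)
    · refine ⟨memA, ?_⟩
      intro e he f hf r hr hr1 heq
      have h000 := congrFun (congrFun (congrFun heq 0) 0) 0
      simp [tensorA, Pi.add_apply, smul_eq_mul] at h000
      have he1 : e 0 0 0 ≤ 1 := entry_le_one_s19 e he 0 0 0
      have hf1 : f 0 0 0 ≤ 1 := entry_le_one_s19 f hf 0 0 0
      have he0 : 0 ≤ e 0 0 0 := he.1 0 0 0
      have hf0 : 0 ≤ f 0 0 0 := hf.1 0 0 0
      have heE : e 0 0 0 = 1 := by nlinarith
      have hfE : f 0 0 0 = 1 := by nlinarith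
      rw [repr_lemma e he, repr_lemma f hf, heE, hfE]
    · refine ⟨memB, ?_⟩
      intro e he f hf r hr hr1 heq
      have h000 := congrFun (congrFun (congrFun heq 0) 0) 0
      simp [tensorB, Pi.add_apply, smul_eq_mul] at h000
      have he1 : e 0 0 0 ≤ 1 := entry_le_one_s19 e he 0 0 0
      have hf1 : f 0 0 0 ≤ 1 := entry_le_one_s19 f hf 0 0 0
      have he0 : 0 ≤ e 0 0 0 := he.1 0 0 0
      have hf0 : 0 ≤ f 0 0 0 := hf.1 0 0 0
      have heE : e 0 0 0 = 0 := by nlinarith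
      have hfE : f 0 0 0 = 0 := by nlinarith
      rw [repr_lemma e he, repr_lemma f hf, heE, hfE]
end
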